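/- Let S be a measurable space and (κ_t)_{t ≥ 1} a sequence of Markov kernels from S to S such that each κ_t satisfies a minorization condition with a common constant δ ∈ (0,1]: there are probability measures ν_t with κ_t(x, A) ≥ δ·ν_t(A) for all x ∈ S and measurable A. Let P be a Markov kernel from S to S with an invariant probability measure π (π.bind P = π), and suppose the kernels converge to P uniformly in total variation: sup_{x ∈ S} dTV(κ_t(x, ·), P(x, ·)) → 0 as t → ∞. Then the distribution of the inhomogeneous Markov chain converges to π uniformly in the initial state: sup_{x₀ ∈ S} dTV(δ_{x₀}.bind κ₁.bind κ₂ ... .bind κ_t, π) → 0 as t → ∞. -/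

import Mathlib

open MeasureTheory ProbabilityTheory

/-- The total variation distance between two measures:
`dTV(μ, ν) = sup { |μ(A) - ν(A)| : A measurable }`. -/
noncomputable def tvDist {S : Type*} [MeasurableSpace S] (μ ν : Measure S) : ℝ :=
  ⨆ A : {A : Set S // MeasurableSet A}, |(μ A).toReal - (ν A).toReal|

open scoped ENNReal

section AuxALFI

variable {S : Type*} [MeasurableSpace S]

noncomputable def alfiChain {S : Type*} [MeasurableSpace S] (κ : ℕ → ProbabilityTheory.Kernel S S)
    (t : ℕ) (x₀ : S) : MeasureTheory.Measure S :=
  (List.range t).foldl (fun m i => m.bind (fun x => κ i x)) (MeasureTheory.Measure.dirac x₀)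

lemma tvDist_abs_term_le_one (μ ν : Measure S) [IsProbabilityMeasure μ] [IsProbabilityMeasure ν]
    (A : Set S) : |(μ A).toReal - (ν A).toReal| ≤ 1 := by
  have h1 : (μ A).toReal ≤ 1 := by
    have := measure_mono (μ := μ) (Set.subset_univ A)
    simpa [measure_univ] using ENNReal.toReal_mono (by simp) this
  have h2 : (ν A).toReal ≤ 1 := by
    have := measure_mono (μ := ν) (Set.subset_univ A)
    simpa [measure_univ] using ENNReal.toReal_mono (by simp) this
  have h3 : 0 ≤ (μ A).toReal := ENNReal.toReal_nonneg
  have h4 : 0 ≤ (ν A).toReal := ENNReal.toReal_nonneg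
  rw [abs_sub_le_iff]
  constructor <;> linarith

lemma tvDist_bddAbove (μ ν : Measure S) [IsProbabilityMeasure μ] [IsProbabilityMeasure ν] :
    BddAbove (Set.range fun A : {A : Set S // MeasurableSet A} =>
      |(μ A).toReal - (ν A).toReal|) := by
  refine ⟨1, ?_⟩
  rintro r ⟨A, rfl⟩
  exact tvDist_abs_term_le_one μ ν A

lemma le_tvDist (μ ν : Measure S) [IsProbabilityMeasure μ] [IsProbabilityMeasure ν]
    {A : Set S} (hA : MeasurableSet A) :
    |(μ A).toReal - (ν A).toReal| ≤ tvDist μ ν :=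
  le_ciSup (tvDist_bddAbove μ ν) (⟨A, hA⟩ : {A : Set S // MeasurableSet A})

lemma tvDist_nonneg (μ ν : Measure S) [IsProbabilityMeasure μ] [IsProbabilityMeasure ν] :
    0 ≤ tvDist μ ν :=
  le_trans (by simp) (le_tvDist μ ν MeasurableSet.empty)

lemma tvDist_le_one (μ ν : Measure S) [IsProbabilityMeasure μ] [IsProbabilityMeasure ν] :
    tvDist μ ν ≤ 1 :=
  ciSup_le fun A => tvDist_abs_term_le_one μ ν A

lemma tvDist_comm (μ ν : Measure S) : tvDist μ ν = tvDist ν μ := by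
  unfold tvDist
  simp_rw [abs_sub_comm]

lemma meas_le_add_tvDist (μ ν : Measure S) [IsProbabilityMeasure μ] [IsProbabilityMeasure ν]
    {A : Set S} (hA : MeasurableSet A) :
    μ A ≤ ν A + ENNReal.ofReal (tvDist μ ν) := by
  have h := le_tvDist μ ν hA
  have h1 : (μ A).toReal ≤ (ν A).toReal + tvDist μ ν := by
    have := abs_le.mp h
    linarith [this.2]
  calc μ A = ENNReal.ofReal ((μ A).toReal) := (ENNReal.ofReal_toReal (measure_ne_top μ A)).symm
    _ ≤ ENNReal.ofReal ((ν A).toReal + tvDist μ ν) := ENNReal.ofReal_le_ofReal h1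
    _ ≤ ENNReal.ofReal ((ν A).toReal) + ENNReal.ofReal (tvDist μ ν) := ENNReal.ofReal_add_le
    _ = ν A + ENNReal.ofReal (tvDist μ ν) := by
        rw [ENNReal.ofReal_toReal (measure_ne_top ν A)]

lemma abs_toReal_sub_le {a b e : ℝ≥0∞} (ha : a ≠ ⊤) (hb : b ≠ ⊤) (he : e ≠ ⊤)
    (h1 : a ≤ b + e) (h2 : b ≤ a + e) : |a.toReal - b.toReal| ≤ e.toReal := by
  rw [abs_sub_le_iff]
  constructor
  · have := ENNReal.toReal_mono (by finiteness) h1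
    rw [ENNReal.toReal_add hb he] at this
    linarith
  · have := ENNReal.toReal_mono (by finiteness) h2
    rw [ENNReal.toReal_add ha he] at this
    linarith

instance bind_isProbabilityMeasure (μ : Measure S) [IsProbabilityMeasure μ]
    (κ : Kernel S S) [IsMarkovKernel κ] :
    IsProbabilityMeasure (μ.bind fun x => κ x) := by
  constructor
  rw [Measure.bind_apply MeasurableSet.univ κ.measurable.aemeasurable]
  simp [measure_univ]

lemma tvDist_triangle (μ ν ρ : Measure S) [IsProbabilityMeasure μ] [IsProbabilityMeasure ν]
    [IsProbabilityMeasure ρ] : tvDist μ ρ ≤ tvDist μ ν + tvDist ν ρ := by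
  refine ciSup_le fun A => ?_
  calc |(μ A).toReal - (ρ A).toReal|
      ≤ |(μ A).toReal - (ν A).toReal| + |(ν A).toReal - (ρ A).toReal| := abs_sub_le _ _ _
    _ ≤ tvDist μ ν + tvDist ν ρ := add_le_add (le_tvDist μ ν A.2) (le_tvDist ν ρ A.2)

/-- Integral comparison: if `μ A ≤ ν A + D` for all measurable `A` and `g ≤ c`, then
`∫⁻ g ∂μ ≤ ∫⁻ g ∂ν + c * D`. Proved via the (unsigned) Hahn decomposition. -/
lemma lintegral_le_of_meas_le (μ ν : Measure S) [IsFiniteMeasure μ] [IsFiniteMeasure ν]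
    (D c : ℝ≥0∞) (hD : ∀ A : Set S, MeasurableSet A → μ A ≤ ν A + D)
    (g : S → ℝ≥0∞) (hg : ∀ x, g x ≤ c) :
    ∫⁻ x, g x ∂μ ≤ (∫⁻ x, g x ∂ν) + c * D := by
  obtain ⟨s, hs, hs1, hs2⟩ := hahn_decomposition (μ := μ) (ν := ν)
  have hle : ν.restrict s ≤ μ.restrict s := by
    refine Measure.le_iff.mpr fun t ht => ?_
    rw [Measure.restrict_apply ht, Measure.restrict_apply ht]
    exact hs1 _ (ht.inter hs) Set.inter_subset_right
  have hlec : μ.restrict sᶜ ≤ ν.restrict sᶜ := by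
    refine Measure.le_iff.mpr fun t ht => ?_
    rw [Measure.restrict_apply ht, Measure.restrict_apply ht]
    exact hs2 _ (ht.inter hs.compl) Set.inter_subset_right
  set ρ : Measure S := μ.restrict s - ν.restrict s with hρdef
  have hρ : μ.restrict s = ν.restrict s + ρ := by
    rw [hρdef, add_comm]
    exact (Measure.sub_add_cancel_of_le hle).symm
  have hρuniv : ρ Set.univ ≤ D := by
    rw [hρdef, Measure.sub_apply MeasurableSet.univ hle]
    simp only [Measure.restrict_apply MeasurableSet.univ, Set.univ_inter]
    exact tsub_le_iff_left.mpr (hD s hs)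
  calc ∫⁻ x, g x ∂μ = (∫⁻ x, g x ∂(μ.restrict s)) + ∫⁻ x, g x ∂(μ.restrict sᶜ) :=
        (lintegral_add_compl g hs).symm
    _ ≤ ((∫⁻ x, g x ∂(ν.restrict s)) + ∫⁻ x, g x ∂ρ) + ∫⁻ x, g x ∂(ν.restrict sᶜ) := by
        gcongr
        · rw [hρ, lintegral_add_measure]
    _ ≤ ((∫⁻ x, g x ∂(ν.restrict s)) + ∫⁻ x, g x ∂(ν.restrict sᶜ)) + ∫⁻ x, g x ∂ρ := by
        ring_nf; exact le_rfl
    _ ≤ (∫⁻ x, g x ∂ν) + c * D := by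
        rw [lintegral_add_compl g hs]
        gcongr
        calc ∫⁻ x, g x ∂ρ ≤ ∫⁻ _, c ∂ρ := lintegral_mono hg
          _ = c * ρ Set.univ := lintegral_const c
          _ ≤ c * D := by gcongr

/-- Doeblin contraction: a Markov kernel with minorization constant `δ` contracts the
total variation distance by a factor `1 - δ`. -/
lemma tvDist_bind_bind_le (μ₁ μ₂ : Measure S) [IsProbabilityMeasure μ₁] [IsProbabilityMeasure μ₂]
    (κ : Kernel S S) [IsMarkovKernel κ] (ν₀ : Measure S) [IsProbabilityMeasure ν₀]
    {δ : ℝ} (hδ0 : 0 < δ) (hδ1 : δ ≤ 1)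
    (hmin : ∀ x : S, ∀ A : Set S, MeasurableSet A → ENNReal.ofReal δ * ν₀ A ≤ κ x A) :
    tvDist (μ₁.bind fun x => κ x) (μ₂.bind fun x => κ x) ≤ (1 - δ) * tvDist μ₁ μ₂ := by
  refine ciSup_le fun A => ?_
  obtain ⟨A, hA⟩ := A
  set c : ℝ≥0∞ := ENNReal.ofReal δ * ν₀ A with hc
  have hct : c ≠ ⊤ := by finiteness
  set g : S → ℝ≥0∞ := fun x => κ x A - c with hgdef
  have hgc : ∀ x, κ x A = g x + c := fun x => (tsub_add_cancel_of_le (hmin x A hA)).symm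
  have hub : ∀ x : S, κ x A ≤ c + ENNReal.ofReal (1 - δ) := by
    intro x
    have h1 : κ x A + κ x Aᶜ = 1 := by
      rw [measure_add_measure_compl hA, measure_univ]
    have h2 : ν₀ A + ν₀ Aᶜ = 1 := by
      rw [measure_add_measure_compl hA, measure_univ]
    have h3 : c + ENNReal.ofReal (1 - δ) + ENNReal.ofReal δ * ν₀ Aᶜ = 1 := by
      rw [hc]
      calc ENNReal.ofReal δ * ν₀ A + ENNReal.ofReal (1 - δ) + ENNReal.ofReal δ * ν₀ Aᶜ
          = ENNReal.ofReal δ * (ν₀ A + ν₀ Aᶜ) + ENNReal.ofReal (1 - δ) := by ring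
        _ = ENNReal.ofReal δ + ENNReal.ofReal (1 - δ) := by rw [h2, mul_one]
        _ = ENNReal.ofReal (δ + (1 - δ)) := (ENNReal.ofReal_add (le_of_lt hδ0) (by linarith)).symm
        _ = 1 := by norm_num
    have h4 : κ x A + ENNReal.ofReal δ * ν₀ Aᶜ ≤
        c + ENNReal.ofReal (1 - δ) + ENNReal.ofReal δ * ν₀ Aᶜ := by
      rw [h3, ← h1]
      exact add_le_add le_rfl (hmin x Aᶜ hA.compl)
    exact (ENNReal.add_le_add_iff_right (by finiteness)).mp h4
  have hgb : ∀ x, g x ≤ ENNReal.ofReal (1 - δ) := by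
    intro x
    rw [hgdef]
    exact tsub_le_iff_left.mpr (hub x)
  set D : ℝ≥0∞ := ENNReal.ofReal (tvDist μ₁ μ₂) with hD
  set e : ℝ≥0∞ := ENNReal.ofReal (1 - δ) * D with he
  have hbind : ∀ μ : Measure S, IsProbabilityMeasure μ →
      (μ.bind fun x => κ x) A = (∫⁻ x, g x ∂μ) + c := by
    intro μ hμ
    rw [Measure.bind_apply hA κ.measurable.aemeasurable]
    calc ∫⁻ x, κ x A ∂μ = ∫⁻ x, g x + c ∂μ := by simp_rw [← hgc]
      _ = (∫⁻ x, g x ∂μ) + c := by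
          rw [lintegral_add_right _ measurable_const, lintegral_const, measure_univ, mul_one]
  have key : ∀ μ η : Measure S, IsProbabilityMeasure μ → IsProbabilityMeasure η →
      (∀ B : Set S, MeasurableSet B → μ B ≤ η B + D) →
      (∫⁻ x, g x ∂μ) ≤ (∫⁻ x, g x ∂η) + e := by
    intro μ η hμ hη hDle
    rw [he]
    exact lintegral_le_of_meas_le μ η D (ENNReal.ofReal (1 - δ)) hDle g hgb
  have h1 := hbind μ₁ inferInstance
  have h2 := hbind μ₂ inferInstance
  have hg1 : (∫⁻ x, g x ∂μ₁) ≠ ⊤ := by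
    refine ne_top_of_le_ne_top ?_ (lintegral_mono hgb)
    simp
  have hg2 : (∫⁻ x, g x ∂μ₂) ≠ ⊤ := by
    refine ne_top_of_le_ne_top ?_ (lintegral_mono hgb)
    simp
  have het : e ≠ ⊤ := by finiteness
  have habs : |((μ₁.bind fun x => κ x) A).toReal - ((μ₂.bind fun x => κ x) A).toReal| ≤
      e.toReal := by
    rw [h1, h2]
    rw [ENNReal.toReal_add hg1 hct, ENNReal.toReal_add hg2 hct]
    have hD12 : ∀ B : Set S, MeasurableSet B → μ₁ B ≤ μ₂ B + D := fun B hB =>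
      meas_le_add_tvDist μ₁ μ₂ hB
    have hD21 : ∀ B : Set S, MeasurableSet B → μ₂ B ≤ μ₁ B + D := fun B hB => by
      rw [hD, tvDist_comm]; exact meas_le_add_tvDist μ₂ μ₁ hB
    have := abs_toReal_sub_le hg1 hg2 het (key μ₁ μ₂ inferInstance inferInstance hD12)
      (key μ₂ μ₁ inferInstance inferInstance hD21)
    calc |(∫⁻ x, g x ∂μ₁).toReal + c.toReal - ((∫⁻ x, g x ∂μ₂).toReal + c.toReal)|
        = |(∫⁻ x, g x ∂μ₁).toReal - (∫⁻ x, g x ∂μ₂).toReal| := by ring_nf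
      _ ≤ e.toReal := this
  refine le_trans habs ?_
  rw [he, hD, ENNReal.toReal_mul, ENNReal.toReal_ofReal (by linarith), ENNReal.toReal_ofReal
    (tvDist_nonneg μ₁ μ₂)]

/-- Perturbation bound: `dTV(μκ, μP) ≤ ε` for any uniform pointwise bound
`dTV(κ x, P x) ≤ ε`. -/
lemma tvDist_bind_kernels_le (μ : Measure S) [IsProbabilityMeasure μ]
    (κ P : Kernel S S) [IsMarkovKernel κ] [IsMarkovKernel P]
    {ε : ℝ} (hε0 : 0 ≤ ε) (hpt : ∀ x : S, tvDist (κ x) (P x) ≤ ε) :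
    tvDist (μ.bind fun x => κ x) (μ.bind fun x => P x) ≤ ε := by
  refine ciSup_le fun A => ?_
  obtain ⟨A, hA⟩ := A
  have key : ∀ (κ₁ κ₂ : Kernel S S), IsMarkovKernel κ₁ → IsMarkovKernel κ₂ →
      (∀ x : S, tvDist (κ₁ x) (κ₂ x) ≤ ε) →
      (μ.bind fun x => κ₁ x) A ≤ (μ.bind fun x => κ₂ x) A + ENNReal.ofReal ε := by
    intro κ₁ κ₂ h₁ h₂ hp
    rw [Measure.bind_apply hA κ₁.measurable.aemeasurable, Measure.bind_apply hA κ₂.measurable.aemeasurable]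
    calc ∫⁻ x, κ₁ x A ∂μ ≤ ∫⁻ x, κ₂ x A + ENNReal.ofReal ε ∂μ := by
          refine lintegral_mono fun x => ?_
          calc κ₁ x A ≤ κ₂ x A + ENNReal.ofReal (tvDist (κ₁ x) (κ₂ x)) :=
                meas_le_add_tvDist (κ₁ x) (κ₂ x) hA
            _ ≤ κ₂ x A + ENNReal.ofReal ε :=
                add_le_add le_rfl (ENNReal.ofReal_le_ofReal (hp x))
      _ = (∫⁻ x, κ₂ x A ∂μ) + ENNReal.ofReal ε := by
          rw [lintegral_add_right _ measurable_const, lintegral_const, measure_univ, mul_one]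
  have hpt' : ∀ x : S, tvDist (P x) (κ x) ≤ ε := fun x => by
    rw [tvDist_comm]; exact hpt x
  have h1 := key κ P inferInstance inferInstance hpt
  have h2 := key P κ inferInstance inferInstance hpt'
  have := abs_toReal_sub_le (measure_ne_top _ _) (measure_ne_top _ _)
    (by finiteness) h1 h2
  refine le_trans this ?_
  rw [ENNReal.toReal_ofReal hε0]

/-- Limit of a sequence satisfying `u (t+1) ≤ r * u t + ε t`, with `0 ≤ r < 1` and `ε → 0`. -/
lemma tendsto_zero_of_contraction_recursion (u ε : ℕ → ℝ) (r : ℝ) (hr0 : 0 ≤ r) (hr1 : r < 1)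
    (hu0 : ∀ t, 0 ≤ u t) (hu1 : ∀ t, u t ≤ 1)
    (hrec : ∀ t, u (t + 1) ≤ r * u t + ε t)
    (hε : Filter.Tendsto ε Filter.atTop (nhds 0)) :
    Filter.Tendsto u Filter.atTop (nhds 0) := by
  rw [Metric.tendsto_atTop]
  intro η hη
  have hη4 : 0 < (1 - r) * (η / 4) := by
    have : 0 < 1 - r := by linarith
    positivity
  obtain ⟨T, hT⟩ := (Metric.tendsto_atTop.mp hε) ((1 - r) * (η / 4)) hη4
  have hTbound : ∀ s, T ≤ s → ε s ≤ (1 - r) * (η / 4) := by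
    intro s hs
    have := hT s hs
    rw [Real.dist_eq, sub_zero] at this
    exact le_of_lt (lt_of_abs_lt this)
  have hind : ∀ t : ℕ, u (T + t) ≤ r ^ t + η / 4 := by
    intro t
    induction t with
    | zero => simpa using le_trans (hu1 T) (by linarith)
    | succ t ih =>
        have h1 : u (T + t + 1) ≤ r * u (T + t) + ε (T + t) := hrec (T + t)
        have h2 : ε (T + t) ≤ (1 - r) * (η / 4) := hTbound _ (Nat.le_add_right T t)
        have h3 : r * u (T + t) ≤ r * (r ^ t + η / 4) :=
          mul_le_mul_of_nonneg_left ih hr0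
        have : u (T + t + 1) ≤ r ^ (t + 1) + η / 4 := by
          have hrt : r * (r ^ t + η / 4) = r ^ (t + 1) + r * (η / 4) := by ring
          nlinarith
        exact this
  obtain ⟨T', hT'⟩ := (Metric.tendsto_atTop.mp
    (tendsto_pow_atTop_nhds_zero_of_lt_one hr0 hr1)) (η / 4) (by positivity)
  refine ⟨T + T', fun n hn => ?_⟩
  have hnT : T ≤ n := le_trans (Nat.le_add_right T T') hn
  have hrepr : n = T + (n - T) := by omega
  have h1 : u n ≤ r ^ (n - T) + η / 4 := by
    have := hind (n - T)
    rwa [← hrepr] at this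
  have h2 : r ^ (n - T) < η / 4 := by
    have := hT' (n - T) (by omega)
    rw [Real.dist_eq, sub_zero] at this
    exact lt_of_abs_lt this
  rw [Real.dist_eq, sub_zero, abs_of_nonneg (hu0 n)]
  linarith

end AuxALFI

/-- **Theorem 2 (convergence of the inhomogeneous Markov chain in ALFI).** Let `(κ t)` be a
sequence of Markov kernels each satisfying a Doeblin minorization with a common constant
`δ ∈ (0,1]`, and let `P` be a Markov kernel with invariant probability measure `π`. If the
kernels converge to `P` uniformly in total variation
(`sup_x dTV(κ t x, P x) → 0`), then the distribution of the inhomogeneous Markov chain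
converges to `π` uniformly in the initial state:
`sup_{x₀} dTV(δ_{x₀} κ₀ κ₁ ⋯ κ_{t-1}, π) → 0` as `t → ∞`. -/
theorem inhomogeneous_chain_uniform_convergence_to_posterior
    {S : Type*} [MeasurableSpace S]
    (κ : ℕ → Kernel S S) [∀ t, IsMarkovKernel (κ t)]
    (ν : ℕ → Measure S) [∀ t, IsProbabilityMeasure (ν t)]
    (δ : ℝ) (hδ : δ ∈ Set.Ioc (0 : ℝ) 1)
    (hmin : ∀ t : ℕ, ∀ x : S, ∀ A : Set S, MeasurableSet A →
      ENNReal.ofReal δ * ν t A ≤ κ t x A)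
    (P : Kernel S S) [IsMarkovKernel P]
    (π : Measure S) [IsProbabilityMeasure π]
    (hπ : π.bind (fun x => P x) = π)
    (hconv : Filter.Tendsto (fun t => ⨆ x : S, tvDist (κ t x) (P x))
      Filter.atTop (nhds 0)) :
    Filter.Tendsto
      (fun t => ⨆ x₀ : S,
        tvDist ((List.range t).foldl (fun m i => m.bind (fun x => κ i x))
          (Measure.dirac x₀)) π)
      Filter.atTop (nhds 0) := by
  obtain ⟨hδ0, hδ1⟩ := hδ
  haveI hne : Nonempty S := by
    by_contra h
    rw [not_nonempty_iff] at h
    have h1 : (Set.univ : Set S) = ∅ := Set.univ_eq_empty_iff.mpr h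
    have h2 := measure_univ (μ := π)
    rw [h1, measure_empty] at h2
    simp at h2
  show Filter.Tendsto (fun t => ⨆ x₀ : S, tvDist (alfiChain κ t x₀) π) Filter.atTop (nhds 0)
  have hsucc : ∀ (t : ℕ) (x₀ : S),
      alfiChain κ (t + 1) x₀ = (alfiChain κ t x₀).bind fun x => κ t x := by
    intro t x₀
    unfold alfiChain
    simp [List.range_succ]
  have hprob : ∀ t x₀, IsProbabilityMeasure (alfiChain κ t x₀) := by
    intro t
    induction t with
    | zero =>
        intro x₀
        unfold alfiChain
        simp only [List.range_zero, List.foldl_nil]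
        infer_instance
    | succ t ih =>
        intro x₀
        rw [hsucc]
        haveI := ih x₀
        infer_instance
  have hbddx : ∀ t : ℕ, BddAbove (Set.range fun x : S => tvDist (κ t x) (P x)) := by
    intro t
    refine ⟨1, ?_⟩
    rintro r ⟨x, rfl⟩
    exact tvDist_le_one _ _
  have hε0 : ∀ t : ℕ, 0 ≤ ⨆ x : S, tvDist (κ t x) (P x) := by
    intro t
    obtain ⟨x⟩ := hne
    exact le_trans (tvDist_nonneg (κ t x) (P x)) (le_ciSup (hbddx t) x)
  have hbdd0 : ∀ t : ℕ, BddAbove (Set.range fun x₀ : S => tvDist (alfiChain κ t x₀) π) := by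
    intro t
    refine ⟨1, ?_⟩
    rintro r ⟨x₀, rfl⟩
    haveI := hprob t x₀
    exact tvDist_le_one _ _
  refine tendsto_zero_of_contraction_recursion _ (fun t => ⨆ x : S, tvDist (κ t x) (P x))
    (1 - δ) (by linarith) (by linarith) ?_ ?_ ?_ hconv
  · intro t
    obtain ⟨x₀⟩ := hne
    haveI := hprob t x₀
    exact le_trans (tvDist_nonneg (alfiChain κ t x₀) π) (le_ciSup (hbdd0 t) x₀)
  · intro t
    refine ciSup_le fun x₀ => ?_
    haveI := hprob t x₀
    exact tvDist_le_one _ _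
  · intro t
    refine ciSup_le fun x₀ => ?_
    haveI := hprob t x₀
    rw [hsucc t x₀]
    calc tvDist ((alfiChain κ t x₀).bind fun x => κ t x) π
        = tvDist ((alfiChain κ t x₀).bind fun x => κ t x) (π.bind fun x => P x) := by rw [hπ]
      _ ≤ tvDist ((alfiChain κ t x₀).bind fun x => κ t x) (π.bind fun x => κ t x)
          + tvDist (π.bind fun x => κ t x) (π.bind fun x => P x) := tvDist_triangle _ _ _
      _ ≤ (1 - δ) * tvDist (alfiChain κ t x₀) π + ⨆ x : S, tvDist (κ t x) (P x) := by
          refine add_le_add ?_ ?_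
          · exact tvDist_bind_bind_le (alfiChain κ t x₀) π (κ t) (ν t) hδ0 hδ1 (hmin t)
          · exact tvDist_bind_kernels_le π (κ t) P (hε0 t)
              (fun x => le_ciSup (hbddx t) x)
      _ ≤ (1 - δ) * (⨆ x₀ : S, tvDist (alfiChain κ t x₀) π) + ⨆ x : S, tvDist (κ t x) (P x) := by
          refine add_le_add ?_ le_rfl
          exact mul_le_mul_of_nonneg_left (le_ciSup (hbdd0 t) x₀) (by linarith)
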